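/- Suppose |ψ⟩ is a unit vector in H_A ⊗ H_B, the operators A_x, B_y are Hermitian with square equal to I, ω_x = ‖Σ_y α_{xy}(I⊗B_y)|ψ⟩‖ > 0, β = Σ_x ω_x, and M_x|ψ⟩ = 0 for all x, where M_x = (1/ω_x)Σ_y α_{xy}(I⊗B_y) − A_x⊗I. Then ⟨ψ|𝓑|ψ⟩ = β, i.e. the Bell expectation attains the value Σ_x ω_x. -/

import Mathlib

open Matrix Kronecker

theorem stmt18 (dA dB n m : ℕ) (ψ : Fin dA × Fin dB → ℂ)
    (hψ : star ψ ⬝ᵥ ψ = 1)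
    (A : Fin n → Matrix (Fin dA) (Fin dA) ℂ) (B : Fin m → Matrix (Fin dB) (Fin dB) ℂ)
    (hA : ∀ x, (A x).IsHermitian) (hB : ∀ y, (B y).IsHermitian)
    (hA2 : ∀ x, A x * A x = 1) (hB2 : ∀ y, B y * B y = 1)
    (α : Fin n → Fin m → ℝ)
    (𝓑 : Matrix (Fin dA × Fin dB) (Fin dA × Fin dB) ℂ)
    (h𝓑 : 𝓑 = ∑ x, ∑ y, (α x y : ℂ) • (A x ⊗ₖ B y))
    (ω : Fin n → ℝ)
    (hω : ∀ x, ω x = Real.sqrt ((star ((∑ y, (α x y : ℂ) •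
        ((1 : Matrix (Fin dA) (Fin dA) ℂ) ⊗ₖ B y)) *ᵥ ψ) ⬝ᵥ
        ((∑ y, (α x y : ℂ) • ((1 : Matrix (Fin dA) (Fin dA) ℂ) ⊗ₖ B y)) *ᵥ ψ))).re)
    (hωpos : ∀ x, 0 < ω x)
    (β : ℝ) (hβ : β = ∑ x, ω x)
    (M : Fin n → Matrix (Fin dA × Fin dB) (Fin dA × Fin dB) ℂ)
    (hM : ∀ x, M x = (((ω x)⁻¹ : ℝ) : ℂ) • (∑ y, (α x y : ℂ) •
        ((1 : Matrix (Fin dA) (Fin dA) ℂ) ⊗ₖ B y))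
        - A x ⊗ₖ (1 : Matrix (Fin dB) (Fin dB) ℂ))
    (hMψ : ∀ x, (M x) *ᵥ ψ = 0) :
    star ψ ⬝ᵥ (𝓑 *ᵥ ψ) = (β : ℂ) := by
  set S : Fin n → Matrix (Fin dA × Fin dB) (Fin dA × Fin dB) ℂ :=
    fun x => ∑ y, (α x y : ℂ) • ((1 : Matrix (Fin dA) (Fin dA) ℂ) ⊗ₖ B y) with hS
  -- key: (A x ⊗ₖ 1) *ᵥ ψ = ω⁻¹ • S x *ᵥ ψ
  have key : ∀ x, (A x ⊗ₖ (1 : Matrix (Fin dB) (Fin dB) ℂ)) *ᵥ ψ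
      = (((ω x)⁻¹ : ℝ) : ℂ) • (S x *ᵥ ψ) := by
    intro x
    have h := hMψ x
    rw [hM x, Matrix.sub_mulVec, Matrix.smul_mulVec, sub_eq_zero] at h
    exact h.symm
  -- the dot product star v ⬝ᵥ v is real
  have hreal : ∀ x, star (S x *ᵥ ψ) ⬝ᵥ (S x *ᵥ ψ)
      = (((star (S x *ᵥ ψ) ⬝ᵥ (S x *ᵥ ψ)).re : ℝ) : ℂ) := by
    intro x
    set v := S x *ᵥ ψ
    have : star v ⬝ᵥ v = ((∑ i, Complex.normSq (v i) : ℝ) : ℂ) := by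
      simp [dotProduct, Pi.star_apply, ← Complex.normSq_eq_conj_mul_self]
    rw [this]
    simp
  have hnorm : ∀ x, star (S x *ᵥ ψ) ⬝ᵥ (S x *ᵥ ψ) = (((ω x)^2 : ℝ) : ℂ) := by
    intro x
    rw [hreal x]
    norm_cast
    have hre : 0 ≤ (star (S x *ᵥ ψ) ⬝ᵥ (S x *ᵥ ψ)).re := by
      by_contra hneg
      push_neg at hneg
      have h1 := hωpos x
      rw [hω x, Real.sqrt_eq_zero_of_nonpos hneg.le] at h1
      exact lt_irrefl 0 h1
    rw [hω x, Real.sq_sqrt hre]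
  -- Hermiticity of A x ⊗ₖ 1
  have hAH : ∀ x, (A x ⊗ₖ (1 : Matrix (Fin dB) (Fin dB) ℂ))ᴴ
      = A x ⊗ₖ (1 : Matrix (Fin dB) (Fin dB) ℂ) := by
    intro x
    ext ⟨i, j⟩ ⟨k, l⟩
    simp only [Matrix.conjTranspose_apply, Matrix.kroneckerMap_apply, star_mul',
      Matrix.one_apply]
    rw [← Matrix.conjTranspose_apply, (hA x).eq]
    by_cases h : j = l <;> simp [h, eq_comm]
  -- 𝓑 = ∑ x, (A x ⊗ₖ 1) * S x
  have h𝓑' : 𝓑 = ∑ x, (A x ⊗ₖ (1 : Matrix (Fin dB) (Fin dB) ℂ)) * S x := by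
    rw [h𝓑]
    refine Finset.sum_congr rfl fun x _ => ?_
    rw [hS]
    rw [Finset.mul_sum]
    refine Finset.sum_congr rfl fun y _ => ?_
    rw [mul_smul_comm, ← Matrix.mul_kronecker_mul, mul_one, one_mul]
  rw [h𝓑', hβ]
  push_cast
  rw [show (∑ x, (A x ⊗ₖ (1 : Matrix (Fin dB) (Fin dB) ℂ)) * S x) *ᵥ ψ
      = ∑ x, ((A x ⊗ₖ (1 : Matrix (Fin dB) (Fin dB) ℂ)) * S x) *ᵥ ψ from
    map_sum (Matrix.mulVec.addMonoidHomLeft ψ) _ _]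
  rw [show star ψ ⬝ᵥ (∑ x, ((A x ⊗ₖ (1 : Matrix (Fin dB) (Fin dB) ℂ)) * S x) *ᵥ ψ)
      = ∑ x, star ψ ⬝ᵥ (((A x ⊗ₖ (1 : Matrix (Fin dB) (Fin dB) ℂ)) * S x) *ᵥ ψ) by
    simp only [dotProduct, Finset.sum_apply, Finset.mul_sum]
    exact Finset.sum_comm]
  refine Finset.sum_congr rfl fun x _ => ?_
  rw [← Matrix.mulVec_mulVec, Matrix.dotProduct_mulVec (star ψ),
    ← hAH x, ← Matrix.star_mulVec, key x]
  rw [star_smul, smul_dotProduct, hnorm x]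
  rw [Complex.star_def, Complex.conj_ofReal, smul_eq_mul, ← Complex.ofReal_mul]
  norm_cast
  have h0 : ω x ≠ 0 := (hωpos x).ne'
  field_simp
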